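/- arXiv:1310.8100 — 6 statements merged into one kernel-verified Lean document; each statement's English description precedes it below -/
import Mathlib

section
/- Let R be a commutative ring with unity and G a group. If the set Ǧ = {g − g⁻¹ : g ∈ G} of elements of the group ring RG is commutative (i.e., any two of its elements commute), then the set RG⁺ of symmetric elements of RG with respect to the classical involution is Lie metabelian. -/
/-- A subset `X` of a ring is Lie metabelian if `[[a,b],[c,d]] = 0` for all `a,b,c,d ∈ X`,
where `[a,b] = a*b - b*a`. -/
def IsLieMetabelianSet {S : Type*} [Ring S] (X : Set S) : Prop :=
  ∀ a ∈ X, ∀ b ∈ X, ∀ c ∈ X, ∀ d ∈ X,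
    (a * b - b * a) * (c * d - d * c) - (c * d - d * c) * (a * b - b * a) = 0

/-- A subset `X` of a ring is commutative if its elements commute pairwise. -/
def IsCommutativeSet {S : Type*} [Ring S] (X : Set S) : Prop :=
  ∀ a ∈ X, ∀ b ∈ X, a * b = b * a

/-- The set `RG⁺` of symmetric elements of the group ring `RG` with respect to the classical
involution determined by `g ↦ g⁻¹`: an element `α = Σ α_g g` is symmetric iff `α(g⁻¹) = α(g)`
for all `g ∈ G`. -/
def symmetricSet (R G : Type*) [CommRing R] [Group G] : Set (MonoidAlgebra R G) :=
  {α | ∀ g : G, α.coeff g⁻¹ = α.coeff g}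

/-- The set `Ǧ = {g - g⁻¹ : g ∈ G}` inside the group ring `RG`. -/
def checkSet (R G : Type*) [CommRing R] [Group G] : Set (MonoidAlgebra R G) :=
  {x | ∃ g : G, x = MonoidAlgebra.of R G g - MonoidAlgebra.of R G g⁻¹}

/-- The commutator of two symmetric elements lies in the `R`-span of `Ǧ`. -/
lemma comm_sub_mem_span {R G : Type*} [CommRing R] [Group G] {α β : MonoidAlgebra R G}
    (hα : α ∈ symmetricSet R G) (hβ : β ∈ symmetricSet R G) :
    α * β - β * α ∈ Submodule.span R (checkSet R G) := by
  classical
  have hab : α * β = ∑ x ∈ α.coeff.support, ∑ y ∈ β.coeff.support,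
      MonoidAlgebra.single (x * y) (α.coeff x * β.coeff y) := by
    rw [MonoidAlgebra.mul_def]; rfl
  have hba : β * α = ∑ x ∈ α.coeff.support, ∑ y ∈ β.coeff.support,
      MonoidAlgebra.single ((x * y)⁻¹) (α.coeff x * β.coeff y) := by
    rw [MonoidAlgebra.mul_def]
    show ∑ y ∈ β.coeff.support, ∑ x ∈ α.coeff.support,
        MonoidAlgebra.single (y * x) (β.coeff y * α.coeff x) = _
    rw [Finset.sum_comm]
    refine Finset.sum_equiv (Equiv.inv G) (fun x => ?_) (fun x hx => ?_)
    · simp only [Equiv.inv_apply, Finsupp.mem_support_iff, hα x]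
    · refine Finset.sum_equiv (Equiv.inv G) (fun y => ?_) (fun y hy => ?_)
      · simp only [Equiv.inv_apply, Finsupp.mem_support_iff, hβ y]
      · simp only [Equiv.inv_apply, hα x, hβ y, mul_inv_rev, inv_inv]
        rw [mul_comm (β.coeff y) (α.coeff x)]
  rw [hab, hba, ← Finset.sum_sub_distrib]
  refine Submodule.sum_mem _ fun x hx => ?_
  rw [← Finset.sum_sub_distrib]
  refine Submodule.sum_mem _ fun y hy => ?_
  have key : MonoidAlgebra.single (x * y) (α.coeff x * β.coeff y)
      - MonoidAlgebra.single ((x * y)⁻¹) (α.coeff x * β.coeff y)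
      = (α.coeff x * β.coeff y) • (MonoidAlgebra.of R G (x * y) - MonoidAlgebra.of R G (x * y)⁻¹) := by
    simp [MonoidAlgebra.of_apply, smul_sub, Finsupp.smul_single, smul_eq_mul]
  rw [key]
  exact Submodule.smul_mem _ _ (Submodule.subset_span ⟨x * y, rfl⟩)

lemma span_comm {R G : Type*} [CommRing R] [Group G] (h : IsCommutativeSet (checkSet R G))
    {u v : MonoidAlgebra R G} (hu : u ∈ Submodule.span R (checkSet R G))
    (hv : v ∈ Submodule.span R (checkSet R G)) : u * v = v * u := by
  refine Submodule.span_induction₂ (p := fun u v _ _ => u * v = v * u)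
    (fun x y hx hy => h x hx y hy)
    (fun y _ => by simp) (fun x _ => by simp)
    (fun x y z _ _ _ h1 h2 => by rw [add_mul, mul_add, h1, h2])
    (fun x y z _ _ _ h1 h2 => by rw [mul_add, add_mul, h1, h2])
    (fun r x y _ _ h1 => by rw [smul_mul_assoc, mul_smul_comm, h1])
    (fun r x y _ _ h1 => by rw [mul_smul_comm, smul_mul_assoc, h1])
    hu hv

theorem lie_metabelian_of_check_commutative (R G : Type*) [CommRing R] [Group G]
    (h : IsCommutativeSet (checkSet R G)) :
    IsLieMetabelianSet (symmetricSet R G) := by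
  intro a ha b hb c hc d hd
  rw [span_comm h (comm_sub_mem_span ha hb) (comm_sub_mem_span hc hd), sub_self]
end

section
/- Let R be a commutative ring with unity of characteristic 0 and G a group. If G has an abelian subgroup B of index 2 and an element x of order 4 such that x⁻¹bx = b⁻¹ for every b ∈ B, then the set RG⁺ of symmetric elements of the group ring RG with respect to the classical involution is Lie metabelian. -/
/-- Two elements of a monoid algebra commute if group elements of their supports
pairwise commute. -/
theorem aux_mul_comm_of_supports {R G : Type*} [CommRing R] [Group G]
    {α β : MonoidAlgebra R G}
    (h : ∀ g ∈ α.coeff.support, ∀ g' ∈ β.coeff.support, g * g' = g' * g) :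
    α * β = β * α := by
  rw [MonoidAlgebra.mul_def, MonoidAlgebra.mul_def, Finsupp.sum_comm]
  refine Finsupp.sum_congr fun g' hg' => ?_
  refine Finsupp.sum_congr fun g hg => ?_
  rw [h g hg g' hg', mul_comm]

/-- A symmetric element supported in an abelian-like subset `B` commutes with any element
supported outside `B`, provided `b * c = c * b⁻¹` for `b ∈ B`, `c ∉ B`. -/
theorem aux_mul_comm_sym {R G : Type*} [CommRing R] [Group G]
    {α β : MonoidAlgebra R G} {B : Set G}
    (hsym : ∀ g : G, α.coeff g⁻¹ = α.coeff g)
    (hβ : ∀ g ∈ β.coeff.support, g ∉ B)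
    (hcomm : ∀ b ∈ B, ∀ c ∉ B, b * c = c * b⁻¹)
    (hα : ∀ g ∈ α.coeff.support, g ∈ B) :
    α * β = β * α := by
  rw [MonoidAlgebra.mul_def, MonoidAlgebra.mul_def (x := β), Finsupp.sum_comm]
  refine Finsupp.sum_congr fun c hc => ?_
  rw [Finsupp.sum, Finsupp.sum]
  refine Finset.sum_equiv (Equiv.inv G) (fun b => ?_) (fun b hb => ?_)
  · simp only [Equiv.inv_apply, Finsupp.mem_support_iff]
    rw [hsym b]
  · have hbB : b ∈ B := hα b hb
    have hcB : c ∉ B := hβ c hc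
    simp only [Equiv.inv_apply]
    rw [hcomm b hbB c hcB, hsym b, mul_comm]

theorem lie_metabelian_of_abelian_index_two (R G : Type*) [CommRing R] [CharZero R] [Group G]
    (B : Subgroup G) (x : G)
    (hBab : ∀ a ∈ B, ∀ b ∈ B, a * b = b * a)
    (hBidx : B.index = 2)
    (hx : orderOf x = 4)
    (hconj : ∀ b ∈ B, x⁻¹ * b * x = b⁻¹) :
    IsLieMetabelianSet (symmetricSet R G) := by
  classical
  -- Group-theoretic preliminaries
  have hxB : x ∉ B := by
    intro h
    have h1 := hconj x h
    rw [inv_mul_cancel, one_mul] at h1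
    have h2 : x ^ 2 = 1 := by rw [pow_two]; nth_rewrite 1 [h1]; rw [inv_mul_cancel]
    have h3 : orderOf x ∣ 2 := orderOf_dvd_of_pow_eq_one h2
    rw [hx] at h3
    omega
  have hmm : ∀ {a b : G}, a ∉ B → b ∉ B → a * b ∈ B := fun ha hb =>
    (Subgroup.mul_mem_iff_of_index_two hBidx).2 (iff_of_false ha hb)
  have hbc : ∀ b ∈ (B : Set G), ∀ c ∉ (B : Set G), b * c = c * b⁻¹ := by
    intro b hb c hc
    have hxiB : x⁻¹ ∉ B := fun h => hxB ((inv_mem_iff (x := x)).1 h)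
    have hb₀ : c * x⁻¹ ∈ B := hmm hc hxiB
    have hxb : x * b⁻¹ = b * x := by
      have h1 := hconj b hb
      calc x * b⁻¹ = x * (x⁻¹ * b * x) := by rw [h1]
        _ = b * x := by rw [← mul_assoc, ← mul_assoc, mul_inv_cancel, one_mul]
    calc b * c = b * ((c * x⁻¹) * x) := by rw [inv_mul_cancel_right]
      _ = (b * (c * x⁻¹)) * x := (mul_assoc b (c * x⁻¹) x).symm
      _ = ((c * x⁻¹) * b) * x := by rw [hBab b hb (c * x⁻¹) hb₀]
      _ = (c * x⁻¹) * (b * x) := mul_assoc (c * x⁻¹) b x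
      _ = (c * x⁻¹) * (x * b⁻¹) := by rw [hxb]
      _ = c * b⁻¹ := by rw [mul_assoc, inv_mul_cancel_left]
  -- The key claim: any Lie bracket of symmetric elements is supported in B
  have key : ∀ a ∈ symmetricSet R G, ∀ b ∈ symmetricSet R G,
      ∀ g : G, g ∉ B → (a * b - b * a).coeff g = 0 := by
    intro a ha b hb g hg
    set aB : MonoidAlgebra R G := MonoidAlgebra.ofCoeff (Finsupp.filter (· ∈ B) a.coeff) with haB
    set aX : MonoidAlgebra R G := MonoidAlgebra.ofCoeff (Finsupp.filter (fun g => g ∉ B) a.coeff) with haX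
    set bB : MonoidAlgebra R G := MonoidAlgebra.ofCoeff (Finsupp.filter (· ∈ B) b.coeff) with hbB
    set bX : MonoidAlgebra R G := MonoidAlgebra.ofCoeff (Finsupp.filter (fun g => g ∉ B) b.coeff) with hbX
    have hsa : aB + aX = a := MonoidAlgebra.coeff_injective (Finsupp.filter_pos_add_filter_neg a.coeff _)
    have hsb : bB + bX = b := MonoidAlgebra.coeff_injective (Finsupp.filter_pos_add_filter_neg b.coeff _)
    -- supports
    have hsuppB : ∀ (μ : MonoidAlgebra R G), ∀ g' ∈ (MonoidAlgebra.ofCoeff (Finsupp.filter (· ∈ B) μ.coeff)).coeff.support,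
        g' ∈ (B : Set G) := by
      intro μ g' hg'
      rw [MonoidAlgebra.coeff_ofCoeff, Finsupp.support_filter, Finset.mem_filter] at hg'
      exact hg'.2
    have hsuppX : ∀ (μ : MonoidAlgebra R G),
        ∀ g' ∈ (MonoidAlgebra.ofCoeff (Finsupp.filter (fun g => g ∉ B) μ.coeff)).coeff.support, g' ∉ (B : Set G) := by
      intro μ g' hg'
      rw [MonoidAlgebra.coeff_ofCoeff, Finsupp.support_filter, Finset.mem_filter] at hg'
      exact hg'.2
    -- symmetry of the B-parts
    have hsymB : ∀ (μ : MonoidAlgebra R G), (∀ g' : G, μ.coeff g'⁻¹ = μ.coeff g') →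
        ∀ g' : G, (MonoidAlgebra.ofCoeff (Finsupp.filter (· ∈ B) μ.coeff)).coeff g'⁻¹ =
            (MonoidAlgebra.ofCoeff (Finsupp.filter (· ∈ B) μ.coeff)).coeff g' := by
      intro μ hμ g'
      rw [MonoidAlgebra.coeff_ofCoeff, Finsupp.filter_apply, Finsupp.filter_apply]
      by_cases h : g' ∈ B
      · rw [if_pos h, if_pos (inv_mem h), hμ]
      · rw [if_neg h, if_neg (fun hh => h ((inv_mem_iff (x := g')).1 hh))]
    -- the three vanishing commutators
    have h1 : aB * bB = bB * aB := by
      refine aux_mul_comm_of_supports fun g1 hg1 g2 hg2 => ?_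
      exact hBab g1 (hsuppB a g1 hg1) g2 (hsuppB b g2 hg2)
    have h2 : aB * bX = bX * aB :=
      aux_mul_comm_sym (hsymB a ha) (hsuppX b) hbc (hsuppB a)
    have h3 : bB * aX = aX * bB :=
      aux_mul_comm_sym (hsymB b hb) (hsuppX a) hbc (hsuppB b)
    -- reduce the bracket to the X-parts
    have hred : a * b - b * a = aX * bX - bX * aX := by
      rw [← hsa, ← hsb]
      rw [add_mul, mul_add, mul_add, add_mul, mul_add, mul_add]
      rw [h1, h2, ← h3]
      abel
    -- the X-part product is supported in B
    have hXmul : ∀ (μ ν : MonoidAlgebra R G), (∀ g' ∈ μ.coeff.support, g' ∉ (B : Set G)) →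
        (∀ g' ∈ ν.coeff.support, g' ∉ (B : Set G)) → (μ * ν).coeff g = 0 := by
      intro μ ν hμ hν
      rw [← Finsupp.notMem_support_iff]
      intro hmem
      have := MonoidAlgebra.support_coeff_mul_subset _ _ hmem
      rw [Finset.mem_mul] at this
      obtain ⟨y, hy, z, hz, hyz⟩ := this
      exact hg (hyz ▸ hmm (hμ y hy) (hν z hz))
    rw [hred, MonoidAlgebra.coeff_sub, Finsupp.sub_apply, hXmul aX bX (hsuppX a) (hsuppX b),
      hXmul bX aX (hsuppX b) (hsuppX a), sub_zero]
  -- conclude: brackets are supported in B, hence commute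
  intro a ha b hb c hc d hd
  rw [sub_eq_zero]
  refine aux_mul_comm_of_supports fun g1 hg1 g2 hg2 => ?_
  rw [Finsupp.mem_support_iff] at hg1 hg2
  have hg1B : g1 ∈ B := by by_contra h; exact hg1 (key a ha b hb g1 h)
  have hg2B : g2 ∈ B := by by_contra h; exact hg2 (key c hc d hd g2 h)
  exact hBab g1 hg1B g2 hg2B
end

section
/- Let R be a commutative ring with unity of characteristic 0 and G a group. If the center Z(G) of G equals {g ∈ G : g² = 1} and Z(G) has index 4 in G, then the set RG⁺ of symmetric elements of the group ring RG with respect to the classical involution is Lie metabelian. -/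
namespace LieMetaAux

variable {G : Type*} [Group G]

/-- The commutator in the convention `b * a = a * b * scomm a b`. -/
def scomm (a b : G) : G := (a * b)⁻¹ * (b * a)

lemma scomm_spec (a b : G) : b * a = a * b * scomm a b := by
  unfold scomm; group

lemma scomm_swap (a b : G) : scomm b a = (scomm a b)⁻¹ := by
  unfold scomm; group

lemma sq_one_of_central (hZ : (Subgroup.center G : Set G) = {g : G | g ^ 2 = 1})
    {z : G} (hz : z ∈ Subgroup.center G) : z ^ 2 = 1 := by
  have : z ∈ ({g : G | g ^ 2 = 1} : Set G) := hZ ▸ hz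
  exact this

lemma central_of_sq_one (hZ : (Subgroup.center G : Set G) = {g : G | g ^ 2 = 1})
    {g : G} (h : g ^ 2 = 1) : g ∈ Subgroup.center G := by
  rw [← SetLike.mem_coe, hZ]; exact h

lemma commute_of_central {z : G} (hz : z ∈ Subgroup.center G) (x : G) : Commute z x :=
  ((Subgroup.mem_center_iff.mp hz) x).symm

lemma sq_central (hidx : (Subgroup.center G).index = 4) (g : G) :
    g ^ 2 ∈ Subgroup.center G := by
  have hcard : Nat.card (G ⧸ Subgroup.center G) = 4 := by
    rw [← Subgroup.index_eq_card]; exact hidx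
  have hfin : Finite (G ⧸ Subgroup.center G) := Nat.finite_of_card_ne_zero (by omega)
  by_cases hab : ∀ q : G ⧸ Subgroup.center G, q ^ 2 = 1
  · have h2 := hab ((g : G ⧸ Subgroup.center G))
    have : ((g ^ 2 : G) : G ⧸ Subgroup.center G) = 1 := by
      rw [← h2]; rfl
    exact (QuotientGroup.eq_one_iff _).mp this
  · exfalso
    push_neg at hab
    obtain ⟨q, hq⟩ := hab
    have h4 : q ^ 4 = 1 := by rw [← hcard]; exact pow_card_eq_one'
    have hn4 : orderOf q ∣ 4 := orderOf_dvd_of_pow_eq_one h4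
    have hn2 : ¬ orderOf q ∣ 2 := fun h => hq (orderOf_dvd_iff_pow_eq_one.mp h)
    have hle : orderOf q ≤ 4 := Nat.le_of_dvd (by norm_num) hn4
    have ho : orderOf q = 4 := by
      interval_cases h : orderOf q
      · exact absurd hn4 (by norm_num)
      · exact absurd (by norm_num : (1:ℕ) ∣ 2) hn2
      · exact absurd (by norm_num : (2:ℕ) ∣ 2) hn2
      · exact absurd hn4 (by norm_num)
      · first | rfl | exact h
    have : IsCyclic (G ⧸ Subgroup.center G) :=
      isCyclic_of_orderOf_eq_card q (by rw [ho, hcard])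
    have hcomm := commutative_of_cyclic_center_quotient
      (QuotientGroup.mk' (Subgroup.center G)) (le_of_eq (QuotientGroup.ker_mk' _))
    have htop : Subgroup.center G = ⊤ := by
      rw [eq_top_iff]
      intro a _
      exact Subgroup.mem_center_iff.mpr fun b => hcomm b a
    rw [htop, Subgroup.index_top] at hidx
    omega

lemma mul_sq_comm (hidx : (Subgroup.center G).index = 4) (a b : G) :
    a * b ^ 2 = b ^ 2 * a :=
  Subgroup.mem_center_iff.mp (sq_central hidx b) a

lemma pow4 (hZ : (Subgroup.center G : Set G) = {g : G | g ^ 2 = 1})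
    (hidx : (Subgroup.center G).index = 4) (g : G) : (g ^ 2) ^ 2 = 1 :=
  sq_one_of_central hZ (sq_central hidx g)

lemma mul_sq_eq_inv (hZ : (Subgroup.center G : Set G) = {g : G | g ^ 2 = 1})
    (hidx : (Subgroup.center G).index = 4) (g : G) : g * g ^ 2 = g⁻¹ := by
  have h : g * g ^ 2 * g = (g ^ 2) ^ 2 := by simp only [pow_two]; group
  rw [pow4 hZ hidx] at h
  calc g * g ^ 2 = g * g ^ 2 * g * g⁻¹ := by group
  _ = g⁻¹ := by rw [h]; group

lemma scomm_central (hidx : (Subgroup.center G).index = 4) (a b : G) :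
    scomm a b ∈ Subgroup.center G := by
  have key : scomm a b = ((a * b) ^ 2)⁻¹ * (b ^ 2 * a ^ 2) := by
    have h1 : (a * b) ^ 2 * scomm a b = a * b ^ 2 * a := by
      unfold scomm; simp only [pow_two]; group
    have h2 : a * b ^ 2 * a = b ^ 2 * a ^ 2 := by
      rw [mul_sq_comm hidx]; simp only [pow_two]; group
    calc scomm a b = ((a * b) ^ 2)⁻¹ * ((a * b) ^ 2 * scomm a b) := by group
    _ = ((a * b) ^ 2)⁻¹ * (b ^ 2 * a ^ 2) := by rw [h1, h2]
  rw [key]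
  exact Subgroup.mul_mem _ (Subgroup.inv_mem _ (sq_central hidx _))
    (Subgroup.mul_mem _ (sq_central hidx _) (sq_central hidx _))

lemma scomm_sq (hZ : (Subgroup.center G : Set G) = {g : G | g ^ 2 = 1})
    (hidx : (Subgroup.center G).index = 4) (a b : G) : scomm a b ^ 2 = 1 :=
  sq_one_of_central hZ (scomm_central hidx a b)

lemma inv_self_of_sq {x : G} (h : x ^ 2 = 1) : x⁻¹ = x :=
  inv_eq_of_mul_eq_one_right (by rw [← pow_two]; exact h)

lemma sq_mul (hidx : (Subgroup.center G).index = 4) (g h : G) :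
    (g * h) ^ 2 = g ^ 2 * h ^ 2 * scomm g h := by
  have hs := commute_of_central (scomm_central hidx g h) h
  calc (g * h) ^ 2 = g * (h * g) * h := by simp only [pow_two]; group
  _ = g * (g * h * scomm g h) * h := by rw [← scomm_spec]
  _ = g * (g * h) * (scomm g h * h) := by group
  _ = g * (g * h) * (h * scomm g h) := by rw [hs.eq]
  _ = g ^ 2 * h ^ 2 * scomm g h := by simp only [pow_two]; group

lemma mul_central_sq (hZ : (Subgroup.center G : Set G) = {g : G | g ^ 2 = 1})
    {z : G} (hz : z ∈ Subgroup.center G) (x : G) : (x * z) ^ 2 = x ^ 2 := by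
  have h1 : z * x = x * z := ((commute_of_central hz x)).eq
  calc (x * z) ^ 2 = x * (z * x) * z := by simp only [pow_two]; group
  _ = x * (x * z) * z := by rw [h1]
  _ = x ^ 2 * z ^ 2 := by simp only [pow_two]; group
  _ = x ^ 2 := by rw [sq_one_of_central hZ hz, mul_one]

lemma coset_cases (hidx : (Subgroup.center G).index = 4)
    {a b : G} (hab : ¬ Commute a b) (x : G) :
    x ∈ Subgroup.center G ∨ (∃ z ∈ Subgroup.center G, x = a * z) ∨
      (∃ z ∈ Subgroup.center G, x = b * z) ∨ (∃ z ∈ Subgroup.center G, x = a * b * z) := by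
  classical
  set Z := Subgroup.center G with hZdef
  have hcard : Nat.card (G ⧸ Z) = 4 := by
    rw [← Subgroup.index_eq_card]; exact hidx
  have hfin : Finite (G ⧸ Z) := Nat.finite_of_card_ne_zero (by omega)
  letI : Fintype (G ⧸ Z) := Fintype.ofFinite _
  -- commuting from coset relations
  have hcomm_of : ∀ u v : G, (∃ z ∈ Z, v = u * z) → Commute u v := by
    rintro u v ⟨z, hz, rfl⟩
    exact (Commute.refl u).mul_right (commute_of_central hz u).symm
  have hQeq : ∀ u v : G, ((u : G ⧸ Z) = (v : G ⧸ Z)) ↔ u⁻¹ * v ∈ Z := fun u v =>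
    QuotientGroup.eq
  have hshift : ∀ u v : G, u⁻¹ * v ∈ Z → ∃ z ∈ Z, v = u * z := by
    intro u v hz
    exact ⟨u⁻¹ * v, hz, by group⟩
  -- distinctness
  have h1a : (1 : G ⧸ Z) ≠ (a : G ⧸ Z) := by
    intro h
    exact hab (Commute.symm (commute_of_central ((QuotientGroup.eq_one_iff a).mp h.symm) b)).symm
  have h1b : (1 : G ⧸ Z) ≠ (b : G ⧸ Z) := by
    intro h
    exact hab (commute_of_central ((QuotientGroup.eq_one_iff b).mp h.symm) a).symm
  have h1ab : (1 : G ⧸ Z) ≠ ((a * b : G) : G ⧸ Z) := by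
    intro h
    have hm : a * b ∈ Z := (QuotientGroup.eq_one_iff (a * b)).mp h.symm
    -- b = a⁻¹ * (a*b), and a commutes with a⁻¹ and with central a*b
    have : Commute a b := by
      have : Commute a (a⁻¹ * (a * b)) :=
        (Commute.inv_right (Commute.refl a)).mul_right (commute_of_central hm a).symm
      simpa using this
    exact hab this
  have hab' : (a : G ⧸ Z) ≠ (b : G ⧸ Z) := by
    intro h
    exact hab (hcomm_of a b (hshift a b ((hQeq a b).mp h)))
  have haab : (a : G ⧸ Z) ≠ ((a * b : G) : G ⧸ Z) := by
    intro h
    have hm : a⁻¹ * (a * b) ∈ Z := (hQeq _ _).mp h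
    have hm' : b ∈ Z := by simpa using hm
    exact hab (Commute.symm (commute_of_central hm' a))
  have hbab : (b : G ⧸ Z) ≠ ((a * b : G) : G ⧸ Z) := by
    intro h
    have hm : b⁻¹ * (a * b) ∈ Z := (hQeq _ _).mp h
    have : Commute b (b * (b⁻¹ * (a * b))) :=
      (Commute.refl b).mul_right (commute_of_central hm b).symm
    have hcb : Commute b (a * b) := by simpa using this
    have : Commute b a := by
      have := hcb.mul_right (Commute.inv_right (Commute.refl b))
      simpa [mul_assoc] using this
    exact hab this.symm
  -- the four cosets exhaust the quotient
  set S : Finset (G ⧸ Z) := {1, (a : G ⧸ Z), (b : G ⧸ Z), ((a*b : G) : G ⧸ Z)} with hS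
  have hScard : S.card = 4 := by
    rw [hS]
    rw [Finset.card_insert_of_notMem (by
      simp only [Finset.mem_insert, Finset.mem_singleton]
      push_neg
      exact ⟨h1a, h1b, h1ab⟩)]
    rw [Finset.card_insert_of_notMem (by
      simp only [Finset.mem_insert, Finset.mem_singleton]
      push_neg
      exact ⟨hab', haab⟩)]
    rw [Finset.card_insert_of_notMem (by
      simp only [Finset.mem_singleton]
      exact hbab)]
    rfl
  have hSuniv : S = Finset.univ := Finset.eq_univ_of_card S (by
    rw [hScard, ← Nat.card_eq_fintype_card, hcard])
  have hx : (x : G ⧸ Z) ∈ S := by rw [hSuniv]; exact Finset.mem_univ _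
  rw [hS] at hx
  simp only [Finset.mem_insert, Finset.mem_singleton] at hx
  rcases hx with h | h | h | h
  · exact Or.inl ((QuotientGroup.eq_one_iff x).mp h)
  · exact Or.inr (Or.inl (hshift a x ((hQeq a x).mp h.symm)))
  · exact Or.inr (Or.inr (Or.inl (hshift b x ((hQeq b x).mp h.symm))))
  · exact Or.inr (Or.inr (Or.inr (hshift (a*b) x ((hQeq (a*b) x).mp h.symm))))



lemma conj_central_cancel {c : G} (hc : c ∈ Subgroup.center G) (x : G) :
    c⁻¹ * (x * c) = x := by
  rw [← (commute_of_central hc x).eq]; group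

lemma scomm_shift {z w : G} (hz : z ∈ Subgroup.center G) (hw : w ∈ Subgroup.center G)
    (u v : G) : scomm (u * z) (v * w) = scomm u v := by
  have hc : z * w ∈ Subgroup.center G := Subgroup.mul_mem _ hz hw
  have e1 : u * z * (v * w) = u * v * (z * w) := by
    rw [mul_assoc u z (v * w), ← mul_assoc z v w, (commute_of_central hz v).eq,
      mul_assoc v z w, ← mul_assoc]
  have e2 : v * w * (u * z) = v * u * (w * z) := by
    rw [mul_assoc v w (u * z), ← mul_assoc w u z, (commute_of_central hw u).eq,
      mul_assoc u w z, ← mul_assoc]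
  have e3 : w * z = z * w := (commute_of_central hw z).eq
  unfold scomm
  rw [e1, e2, e3]
  have e4 : (u * v * (z * w))⁻¹ * (v * u * (z * w)) =
      (z * w)⁻¹ * (((u * v)⁻¹ * (v * u)) * (z * w)) := by group
  rw [e4, conj_central_cancel hc]

lemma scomm_a_ab (a b : G) : scomm a (a * b) = scomm a b := by
  unfold scomm; group

lemma scomm_b_ab (hidx : (Subgroup.center G).index = 4) (a b : G) :
    scomm b (a * b) = scomm a b := by
  have h1 : scomm b (a * b) = b⁻¹ * a⁻¹ * b⁻¹ * (a * b ^ 2) := by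
    unfold scomm; simp only [pow_two]; group
  rw [h1, mul_sq_comm hidx a b]
  unfold scomm; simp only [pow_two]; group

lemma scomm_unique (hZ : (Subgroup.center G : Set G) = {g : G | g ^ 2 = 1})
    (hidx : (Subgroup.center G).index = 4)
    {a b c d : G} (hcd : ¬ Commute c d) (hab : ¬ Commute a b) :
    scomm c d = scomm a b := by
  have hswap : ∀ u v : G, scomm u v = scomm a b → scomm v u = scomm a b := by
    intro u v h
    rw [scomm_swap, h, inv_self_of_sq (scomm_sq hZ hidx a b)]
  have hsame : ∀ (u z w : G), z ∈ Subgroup.center G → w ∈ Subgroup.center G →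
      Commute (u * z) (u * w) := by
    intro u z w hz hw
    exact Commute.mul_left
      ((Commute.refl u).mul_right (commute_of_central hw u).symm)
      (commute_of_central hz (u * w))
  rcases coset_cases hidx hab c with hc0 | ⟨z, hz, rfl⟩ | ⟨z, hz, rfl⟩ | ⟨z, hz, rfl⟩
  · exact absurd (commute_of_central hc0 d) hcd
  · rcases coset_cases hidx hab d with hd0 | ⟨w, hw, rfl⟩ | ⟨w, hw, rfl⟩ | ⟨w, hw, rfl⟩
    · exact absurd (commute_of_central hd0 (a * z)).symm hcd
    · exact absurd (hsame a z w hz hw) hcd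
    · rw [scomm_shift hz hw]
    · rw [scomm_shift hz hw]; exact scomm_a_ab a b
  · rcases coset_cases hidx hab d with hd0 | ⟨w, hw, rfl⟩ | ⟨w, hw, rfl⟩ | ⟨w, hw, rfl⟩
    · exact absurd (commute_of_central hd0 (b * z)).symm hcd
    · rw [scomm_shift hz hw]; exact hswap a b rfl
    · exact absurd (hsame b z w hz hw) hcd
    · rw [scomm_shift hz hw]; exact scomm_b_ab hidx a b
  · rcases coset_cases hidx hab d with hd0 | ⟨w, hw, rfl⟩ | ⟨w, hw, rfl⟩ | ⟨w, hw, rfl⟩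
    · exact absurd (commute_of_central hd0 (a * b * z)).symm hcd
    · rw [scomm_shift hz hw]; exact hswap a (a * b) (scomm_a_ab a b)
    · rw [scomm_shift hz hw]; exact hswap b (a * b) (scomm_b_ab hidx a b)
    · exact absurd (hsame (a * b) z w hz hw) hcd

section Algebra

variable (R : Type*) [CommRing R]

lemma of_comm_all {z : G} (hz : z ∈ Subgroup.center G) (x : MonoidAlgebra R G) :
    Commute (MonoidAlgebra.of R G z) x :=
  MonoidAlgebra.of_commute (fun a' => commute_of_central hz a') x

/-- The image of a central group element in the center of the group algebra. -/
noncomputable def cOf {z : G} (hz : z ∈ Subgroup.center G) : Subring.center (MonoidAlgebra R G) :=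
  ⟨MonoidAlgebra.of R G z, Subring.mem_center_iff.mpr fun x => ((of_comm_all R hz x).symm).eq⟩

@[simp] lemma cOf_coe {z : G} (hz : z ∈ Subgroup.center G) :
    ((cOf R hz : Subring.center (MonoidAlgebra R G)) : MonoidAlgebra R G) =
      MonoidAlgebra.of R G z := rfl

lemma kcomm (w : Subring.center (MonoidAlgebra R G)) (x : MonoidAlgebra R G) :
    Commute x (↑w) := Subring.mem_center_iff.mp w.2 x

lemma csq {z : G} (hz : z ∈ Subgroup.center G) (h1 : z ^ 2 = 1) :
    cOf R hz * cOf R hz = 1 := by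
  apply Subtype.ext
  push_cast [cOf_coe]
  rw [← map_mul, ← pow_two, h1, map_one]

/-- `σ g = g + g⁻¹` in the group algebra. -/
noncomputable def sigmaEl (g : G) : MonoidAlgebra R G :=
  MonoidAlgebra.of R G g + MonoidAlgebra.of R G g⁻¹

lemma sigma_mul (hZ : (Subgroup.center G : Set G) = {g : G | g ^ 2 = 1})
    (hidx : (Subgroup.center G).index = 4) (g h : G) :
    sigmaEl R g * sigmaEl R h =
      MonoidAlgebra.of R G (g * h) *
        ((1 + MonoidAlgebra.of R G (g ^ 2)) * (1 + MonoidAlgebra.of R G (h ^ 2))) := by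
  have e1 : g * h * h ^ 2 = g * h⁻¹ := by rw [mul_assoc, mul_sq_eq_inv hZ hidx]
  have e2 : g * h * g ^ 2 = g⁻¹ * h := by
    rw [mul_assoc g h (g ^ 2), ← (commute_of_central (sq_central hidx g) h).eq,
      ← mul_assoc, mul_sq_eq_inv hZ hidx]
  have e3 : g * h * (g ^ 2 * h ^ 2) = g⁻¹ * h⁻¹ := by
    have h1 : g * h * (g ^ 2 * h ^ 2) = g * h * g ^ 2 * h ^ 2 := by group
    rw [h1, e2, mul_assoc, mul_sq_eq_inv hZ hidx]
  unfold sigmaEl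
  simp only [mul_add, add_mul, mul_one, one_mul, ← map_mul]
  rw [e1, e2, e3]
  try abel

lemma sigma_swap (hZ : (Subgroup.center G : Set G) = {g : G | g ^ 2 = 1})
    (hidx : (Subgroup.center G).index = 4) {g h : G} (hgh : ¬ Commute g h) :
    sigmaEl R h * sigmaEl R g =
      sigmaEl R g * sigmaEl R h * MonoidAlgebra.of R G (scomm g h) := by
  rw [sigma_mul R hZ hidx h g, sigma_mul R hZ hidx g h]
  have e : h * g = g * h * scomm g h := scomm_spec g h
  rw [e, map_mul]
  have c1 : Commute (MonoidAlgebra.of R G (scomm g h))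
      ((1 + MonoidAlgebra.of R G (h ^ 2)) * (1 + MonoidAlgebra.of R G (g ^ 2))) :=
    of_comm_all R (scomm_central hidx g h) _
  have c2 : (1 + MonoidAlgebra.of R G (h ^ 2)) * (1 + MonoidAlgebra.of R G (g ^ 2)) =
      (1 + MonoidAlgebra.of R G (g ^ 2)) * (1 + MonoidAlgebra.of R G (h ^ 2)) := by
    have : Commute (1 + MonoidAlgebra.of R G (h ^ 2)) (1 + MonoidAlgebra.of R G (g ^ 2)) :=
      Commute.add_left (Commute.one_left _)
        (of_comm_all R (sq_central hidx h) _)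
    exact this.eq
  rw [c2]
  simp only [mul_assoc]
  have c3 : Commute (MonoidAlgebra.of R G (scomm g h))
      ((1 + MonoidAlgebra.of R G (g ^ 2)) * (1 + MonoidAlgebra.of R G (h ^ 2))) :=
    of_comm_all R (scomm_central hidx g h) _
  have c4 : MonoidAlgebra.of R G (scomm g h) *
      ((1 + MonoidAlgebra.of R G (g ^ 2)) * (1 + MonoidAlgebra.of R G (h ^ 2))) =
      (1 + MonoidAlgebra.of R G (g ^ 2)) *
        ((1 + MonoidAlgebra.of R G (h ^ 2)) * MonoidAlgebra.of R G (scomm g h)) := by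
    rw [c3.eq, mul_assoc]
  rw [c4]

end Algebra

section Core

variable (R : Type*) [CommRing R]

lemma core (hZ : (Subgroup.center G : Set G) = {g : G | g ^ 2 = 1})
    (hidx : (Subgroup.center G).index = 4) (g h k l : G) :
    (sigmaEl R g * sigmaEl R h - sigmaEl R h * sigmaEl R g) *
        (sigmaEl R k * sigmaEl R l - sigmaEl R l * sigmaEl R k) -
      (sigmaEl R k * sigmaEl R l - sigmaEl R l * sigmaEl R k) *
        (sigmaEl R g * sigmaEl R h - sigmaEl R h * sigmaEl R g) = 0 := by
  have hsigc : ∀ {u v : G}, Commute u v → Commute (sigmaEl R u) (sigmaEl R v) := by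
    intro u v huv
    unfold sigmaEl
    exact Commute.add_left
      ((huv.map (MonoidAlgebra.of R G)).add_right
        ((huv.inv_right).map (MonoidAlgebra.of R G)))
      (((huv.inv_left).map (MonoidAlgebra.of R G)).add_right
        ((huv.inv_left.inv_right).map (MonoidAlgebra.of R G)))
  by_cases hgh : Commute g h
  · rw [(hsigc hgh).eq, sub_self, zero_mul, mul_zero, sub_self]
  by_cases hkl : Commute k l
  · rw [(hsigc hkl).eq, sub_self, mul_zero, zero_mul, sub_self]
  -- main case
  have hsc : scomm g h ∈ Subgroup.center G := scomm_central hidx g h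
  set aK := cOf R (sq_central hidx g) with haKdef
  set bK := cOf R (sq_central hidx h) with hbKdef
  set cK := cOf R (sq_central hidx k) with hcKdef
  set dK := cOf R (sq_central hidx l) with hdKdef
  set sK := cOf R hsc with hsKdef
  have haK : aK * aK = 1 := csq R _ (pow4 hZ hidx g)
  have hbK : bK * bK = 1 := csq R _ (pow4 hZ hidx h)
  have hcK : cK * cK = 1 := csq R _ (pow4 hZ hidx k)
  have hdK : dK * dK = 1 := csq R _ (pow4 hZ hidx l)
  have hsK : sK * sK = 1 := csq R _ (sq_one_of_central hZ hsc)
  set w₁ : Subring.center (MonoidAlgebra R G) := (1 + aK) * (1 + bK) * (1 - sK) with hw₁def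
  set w₂ : Subring.center (MonoidAlgebra R G) := (1 + cK) * (1 + dK) * (1 - sK) with hw₂def
  have hw₁coe : (↑w₁ : MonoidAlgebra R G) =
      (1 + MonoidAlgebra.of R G (g ^ 2)) * (1 + MonoidAlgebra.of R G (h ^ 2)) *
        (1 - MonoidAlgebra.of R G (scomm g h)) := by
    rw [hw₁def, haKdef, hbKdef, hsKdef]; push_cast [cOf_coe]; ring_nf
  have hw₂coe : (↑w₂ : MonoidAlgebra R G) =
      (1 + MonoidAlgebra.of R G (k ^ 2)) * (1 + MonoidAlgebra.of R G (l ^ 2)) *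
        (1 - MonoidAlgebra.of R G (scomm g h)) := by
    rw [hw₂def, hcKdef, hdKdef, hsKdef]; push_cast [cOf_coe]; ring_nf
  have hA : sigmaEl R g * sigmaEl R h - sigmaEl R h * sigmaEl R g =
      MonoidAlgebra.of R G (g * h) * ↑w₁ := by
    rw [sigma_swap R hZ hidx hgh, sigma_mul R hZ hidx g h, hw₁coe]
    noncomm_ring
  have hC : sigmaEl R k * sigmaEl R l - sigmaEl R l * sigmaEl R k =
      MonoidAlgebra.of R G (k * l) * ↑w₂ := by
    rw [sigma_swap R hZ hidx hkl, sigma_mul R hZ hidx k l, hw₂coe,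
      scomm_unique hZ hidx hkl hgh]
    noncomm_ring
  rw [hA, hC]
  by_cases htt : Commute (g * h) (k * l)
  · have hcmt : Commute (MonoidAlgebra.of R G (g * h) * ↑w₁)
        (MonoidAlgebra.of R G (k * l) * ↑w₂) :=
      Commute.mul_left
        ((htt.map (MonoidAlgebra.of R G)).mul_right
          (kcomm R w₂ (MonoidAlgebra.of R G (g * h))))
        (((kcomm R w₁ (MonoidAlgebra.of R G (k * l))).symm).mul_right
          (kcomm R w₂ (↑w₁ : MonoidAlgebra R G)))
    rw [hcmt.eq, sub_self]
  · -- noncommuting outer pair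
    have e := scomm_spec (g * h) (k * l)
    rw [scomm_unique hZ hidx htt hgh] at e
    have hsw : MonoidAlgebra.of R G (k * l) * MonoidAlgebra.of R G (g * h) =
        MonoidAlgebra.of R G (g * h) * MonoidAlgebra.of R G (k * l) *
          MonoidAlgebra.of R G (scomm g h) := by
      rw [← map_mul, ← map_mul, ← map_mul, e]
    have e₁ : (MonoidAlgebra.of R G (g * h) * ↑w₁) * (MonoidAlgebra.of R G (k * l) * ↑w₂) =
        (MonoidAlgebra.of R G (g * h) * MonoidAlgebra.of R G (k * l)) *
          ((↑w₁ : MonoidAlgebra R G) * ↑w₂) := by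
      calc (MonoidAlgebra.of R G (g * h) * ↑w₁) * (MonoidAlgebra.of R G (k * l) * ↑w₂)
          = MonoidAlgebra.of R G (g * h) * ((↑w₁ : MonoidAlgebra R G) *
            MonoidAlgebra.of R G (k * l)) * ↑w₂ := by noncomm_ring
        _ = MonoidAlgebra.of R G (g * h) * (MonoidAlgebra.of R G (k * l) *
            (↑w₁ : MonoidAlgebra R G)) * ↑w₂ := by
            rw [← (kcomm R w₁ (MonoidAlgebra.of R G (k * l))).eq]
        _ = (MonoidAlgebra.of R G (g * h) * MonoidAlgebra.of R G (k * l)) *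
            ((↑w₁ : MonoidAlgebra R G) * ↑w₂) := by noncomm_ring
    have e₂ : (MonoidAlgebra.of R G (k * l) * ↑w₂) * (MonoidAlgebra.of R G (g * h) * ↑w₁) =
        (MonoidAlgebra.of R G (k * l) * MonoidAlgebra.of R G (g * h)) *
          ((↑w₁ : MonoidAlgebra R G) * ↑w₂) := by
      calc (MonoidAlgebra.of R G (k * l) * ↑w₂) * (MonoidAlgebra.of R G (g * h) * ↑w₁)
          = MonoidAlgebra.of R G (k * l) * ((↑w₂ : MonoidAlgebra R G) *
            MonoidAlgebra.of R G (g * h)) * ↑w₁ := by noncomm_ring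
        _ = MonoidAlgebra.of R G (k * l) * (MonoidAlgebra.of R G (g * h) *
            (↑w₂ : MonoidAlgebra R G)) * ↑w₁ := by
            rw [← (kcomm R w₂ (MonoidAlgebra.of R G (g * h))).eq]
        _ = (MonoidAlgebra.of R G (k * l) * MonoidAlgebra.of R G (g * h)) *
            ((↑w₂ : MonoidAlgebra R G) * ↑w₁) := by noncomm_ring
        _ = (MonoidAlgebra.of R G (k * l) * MonoidAlgebra.of R G (g * h)) *
            ((↑w₁ : MonoidAlgebra R G) * ↑w₂) := by
            rw [(kcomm R w₁ (↑w₂ : MonoidAlgebra R G)).eq]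
    rw [e₁, e₂, hsw]
    -- now reduce to a computation in the (commutative) center
    have hKzero : (1 - sK) * (w₁ * w₂) = 0 := by
      rcases coset_cases hidx htt g with h0 | ⟨z, hz, hgz⟩ | ⟨z, hz, hgz⟩ | ⟨z, hz, hgz⟩
      · exact absurd (commute_of_central h0 h) hgh
      · -- g in the coset of g*h : h² = s
        have h1 : g ^ 2 = (g * h * z) ^ 2 := congrArg (· ^ 2) hgz
        rw [mul_central_sq hZ hz, sq_mul hidx g h] at h1
        have hK1 : aK = aK * bK * sK := by
          apply Subtype.ext
          rw [haKdef, hbKdef, hsKdef]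
          push_cast [cOf_coe]
          rw [← map_mul, ← map_mul]
          exact congrArg _ h1
        have hbs : bK = sK := by
          linear_combination (aK * bK) * hK1 + (sK - bK) * haK + (aK * aK * sK) * hbK
        rw [hw₁def, hw₂def, hbs]
        linear_combination (-(1 + aK) * (1 + cK) * (1 + dK) * (1 - sK) ^ 2) * hsK
      · -- g in the coset of k*l : g² = k² l² s
        have h1 : g ^ 2 = (k * l * z) ^ 2 := congrArg (· ^ 2) hgz
        rw [mul_central_sq hZ hz, sq_mul hidx k l, scomm_unique hZ hidx hkl hgh] at h1
        have hK2 : aK = cK * dK * sK := by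
          apply Subtype.ext
          rw [haKdef, hcKdef, hdKdef, hsKdef]
          push_cast [cOf_coe]
          rw [← map_mul, ← map_mul]
          exact congrArg _ h1
        rw [hw₁def, hw₂def]
        linear_combination (-(1 + bK) * (1 - sK) ^ 2 * dK * (1 + dK) * (1 - sK)) * hcK +
          (-(1 + bK) * (1 - sK) ^ 2 * (1 + cK) * (1 - sK)) * hdK +
          (-(1 + bK) * (1 - sK) ^ 2 * (1 + cK) * (1 + dK) * cK * dK) * hsK +
          ((1 + bK) * (1 + cK) * (1 + dK) * (1 - sK) ^ 3) * hK2
      · -- g in the coset of (g*h)*(k*l)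
        have h1 : g ^ 2 = (g * h * (k * l) * z) ^ 2 := congrArg (· ^ 2) hgz
        rw [mul_central_sq hZ hz, sq_mul hidx (g * h) (k * l),
          scomm_unique hZ hidx htt hgh, sq_mul hidx g h, sq_mul hidx k l,
          scomm_unique hZ hidx hkl hgh] at h1
        have hK3 : aK = aK * bK * sK * (cK * dK * sK) * sK := by
          apply Subtype.ext
          rw [haKdef, hbKdef, hcKdef, hdKdef, hsKdef]
          push_cast [cOf_coe]
          rw [← map_mul, ← map_mul, ← map_mul, ← map_mul, ← map_mul, ← map_mul]
          exact congrArg _ h1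
        have hb3 : bK = cK * dK * sK := by
          linear_combination (aK * bK) * hK3 + (cK * dK * sK ^ 3 - bK) * haK +
            (aK * aK * cK * dK * sK ^ 3) * hbK + (cK * dK * sK) * hsK
        rw [hw₁def, hw₂def]
        linear_combination (-(1 + aK) * (1 - sK) ^ 2 * dK * (1 + dK) * (1 - sK)) * hcK +
          (-(1 + aK) * (1 - sK) ^ 2 * (1 + cK) * (1 - sK)) * hdK +
          (-(1 + aK) * (1 - sK) ^ 2 * (1 + cK) * (1 + dK) * cK * dK) * hsK +
          ((1 + aK) * (1 + cK) * (1 + dK) * (1 - sK) ^ 3) * hb3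
    have e₄ : ((↑((1 - sK) * (w₁ * w₂)) : MonoidAlgebra R G)) =
        (1 - MonoidAlgebra.of R G (scomm g h)) *
          ((↑w₁ : MonoidAlgebra R G) * ↑w₂) := by
      push_cast [hsKdef, cOf_coe]
      ring_nf
    calc (MonoidAlgebra.of R G (g * h) * MonoidAlgebra.of R G (k * l)) *
          ((↑w₁ : MonoidAlgebra R G) * ↑w₂) -
        (MonoidAlgebra.of R G (g * h) * MonoidAlgebra.of R G (k * l) *
          MonoidAlgebra.of R G (scomm g h)) * ((↑w₁ : MonoidAlgebra R G) * ↑w₂)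
        = (MonoidAlgebra.of R G (g * h) * MonoidAlgebra.of R G (k * l)) *
            ((1 - MonoidAlgebra.of R G (scomm g h)) *
              ((↑w₁ : MonoidAlgebra R G) * ↑w₂)) := by noncomm_ring
      _ = (MonoidAlgebra.of R G (g * h) * MonoidAlgebra.of R G (k * l)) *
            ((↑((1 - sK) * (w₁ * w₂)) : MonoidAlgebra R G)) := by rw [e₄]
      _ = 0 := by rw [hKzero]; push_cast; rw [mul_zero]

end Core

section Span

variable (R : Type*) [CommRing R]

/-- Generating set: the elements `g + g⁻¹` together with central "singles". -/
def genSet : Set (MonoidAlgebra R G) :=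
  {x | ∃ g : G, x = sigmaEl R g} ∪
    {x | ∃ z : G, ∃ r : R, z ∈ Subgroup.center G ∧ x = MonoidAlgebra.single z r}


lemma ma_sub_apply (f g : MonoidAlgebra R G) (x : G) : (f - g).coeff x = f.coeff x - g.coeff x :=
  Finsupp.sub_apply f.coeff g.coeff x

lemma ma_add_apply (f g : MonoidAlgebra R G) (x : G) : (f + g).coeff x = f.coeff x + g.coeff x :=
  Finsupp.add_apply f.coeff g.coeff x

lemma ma_smul_apply (r : R) (f : MonoidAlgebra R G) (x : G) : (r • f).coeff x = r * f.coeff x :=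
  Finsupp.smul_apply r f.coeff x

lemma ma_single_apply (a x : G) (b : R) [Decidable (a = x)] :
    (MonoidAlgebra.single a b : MonoidAlgebra R G).coeff x = if a = x then b else 0 :=
  MonoidAlgebra.coeff_single_apply

lemma symm_mem_span (hZ : (Subgroup.center G : Set G) = {g : G | g ^ 2 = 1})
    (α : MonoidAlgebra R G) (hα : ∀ g : G, α.coeff g⁻¹ = α.coeff g) :
    α ∈ Submodule.span R (genSet R (G := G)) := by
  classical
  suffices H : ∀ (n : ℕ) (β : MonoidAlgebra R G), (∀ g : G, β.coeff g⁻¹ = β.coeff g) →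
      β.coeff.support.card ≤ n → β ∈ Submodule.span R (genSet R (G := G)) from
    H α.coeff.support.card α hα le_rfl
  intro n
  induction n with
  | zero =>
    intro β hβ hcard
    have hβ0 : β = 0 := by
      rwa [Nat.le_zero, Finset.card_eq_zero, Finsupp.support_eq_empty, MonoidAlgebra.coeff_eq_zero] at hcard
    rw [hβ0]
    exact Submodule.zero_mem _
  | succ n ih =>
    intro β hβ hcard
    rcases eq_or_ne β 0 with rfl | hβ0
    · exact Submodule.zero_mem _
    obtain ⟨g, hg⟩ := Finsupp.support_nonempty_iff.mpr (mt MonoidAlgebra.coeff_eq_zero.mp hβ0)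
    by_cases hgi : g⁻¹ = g
    · -- g is an involution, hence central
      have hg2 : g ^ 2 = 1 := by
        rw [pow_two]
        nth_rewrite 2 [← hgi]
        simp
      set γ := β - MonoidAlgebra.single g (β.coeff g) with hγ
      have hγsymm : ∀ x : G, γ.coeff x⁻¹ = γ.coeff x := by
        intro x
        rw [hγ]
        simp only [ma_sub_apply]
        rw [hβ x]
        congr 1
        rw [ma_single_apply, ma_single_apply]
        exact if_congr (by rw [← inv_eq_iff_eq_inv, hgi]) rfl rfl
      have hγg : γ.coeff g = 0 := by
        rw [hγ]
        simp [ma_sub_apply, ma_single_apply]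
      have hsub : γ.coeff.support ⊆ β.coeff.support.erase g := by
        intro x hx
        rw [Finset.mem_erase]
        have hxne := Finsupp.mem_support_iff.mp hx
        have hxg : x ≠ g := by
          intro heq
          rw [heq, hγg] at hxne
          exact hxne rfl
        refine ⟨hxg, Finsupp.mem_support_iff.mpr ?_⟩
        rw [hγ, ma_sub_apply, ma_single_apply,
          if_neg (fun hcontr => hxg hcontr.symm), sub_zero] at hxne
        exact hxne
      have hcard' : γ.coeff.support.card ≤ n := by
        have h1 : γ.coeff.support.card ≤ (β.coeff.support.erase g).card := Finset.card_le_card hsub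
        have h2 : (β.coeff.support.erase g).card = β.coeff.support.card - 1 :=
          Finset.card_erase_of_mem hg
        have h3 : 1 ≤ β.coeff.support.card := Finset.card_pos.mpr ⟨g, hg⟩
        omega
      have hβeq : β = γ + MonoidAlgebra.single g (β.coeff g) := by
        rw [hγ, sub_add_cancel]
      rw [hβeq]
      exact Submodule.add_mem _ (ih γ hγsymm hcard')
        (Submodule.subset_span (Or.inr ⟨g, β.coeff g, central_of_sq_one hZ hg2, rfl⟩))
    · -- g is not an involution: subtract β g • (g + g⁻¹)
      set γ := β - β.coeff g • sigmaEl R g with hγ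
      have hsig : ∀ x : G, (sigmaEl R g : MonoidAlgebra R G).coeff x =
          (if g = x then (1 : R) else 0) + (if g⁻¹ = x then (1 : R) else 0) := by
        intro x
        unfold sigmaEl
        rw [MonoidAlgebra.of_apply, MonoidAlgebra.of_apply]
        simp [ma_add_apply, ma_single_apply, Finsupp.single_apply]
      have hsigsymm : ∀ x : G, (sigmaEl R g : MonoidAlgebra R G).coeff x⁻¹ =
          (sigmaEl R g : MonoidAlgebra R G).coeff x := by
        intro x
        rw [hsig, hsig]
        rw [if_congr (show (g = x⁻¹) ↔ (g⁻¹ = x) from inv_eq_iff_eq_inv.symm) rfl rfl,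
          if_congr (show (g⁻¹ = x⁻¹) ↔ (g = x) from inv_inj) rfl rfl]
        exact add_comm _ _
      have hγsymm : ∀ x : G, γ.coeff x⁻¹ = γ.coeff x := by
        intro x
        rw [hγ]
        simp only [ma_sub_apply, ma_smul_apply]
        rw [hβ x, hsigsymm x]
      have hγg : γ.coeff g = 0 := by
        rw [hγ]
        simp only [ma_sub_apply, ma_smul_apply]
        rw [hsig]
        rw [if_pos rfl, if_neg hgi]
        simp
      have hγgi : γ.coeff g⁻¹ = 0 := by
        rw [hγsymm g, hγg]
      have hsub : γ.coeff.support ⊆ β.coeff.support.erase g := by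
        intro x hx
        rw [Finset.mem_erase]
        have hxne := Finsupp.mem_support_iff.mp hx
        have hxg : x ≠ g := by
          intro hteq; rw [hteq, hγg] at hxne; exact hxne rfl
        have hxgi : x ≠ g⁻¹ := by
          intro hteq; rw [hteq, hγgi] at hxne; exact hxne rfl
        refine ⟨hxg, Finsupp.mem_support_iff.mpr ?_⟩
        rw [hγ, ma_sub_apply, ma_smul_apply, hsig,
          if_neg (fun hcontr => hxg hcontr.symm),
          if_neg (fun hcontr => hxgi (by rw [← hcontr]))] at hxne
        simpa using hxne
      have hcard' : γ.coeff.support.card ≤ n := by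
        have h1 : γ.coeff.support.card ≤ (β.coeff.support.erase g).card := Finset.card_le_card hsub
        have h2 : (β.coeff.support.erase g).card = β.coeff.support.card - 1 :=
          Finset.card_erase_of_mem hg
        have h3 : 1 ≤ β.coeff.support.card := Finset.card_pos.mpr ⟨g, hg⟩
        omega
      have hβeq : β = γ + β.coeff g • sigmaEl R g := by
        rw [hγ, sub_add_cancel]
      rw [hβeq]
      exact Submodule.add_mem _ (ih γ hγsymm hcard')
        (Submodule.smul_mem _ _ (Submodule.subset_span (Or.inl ⟨g, rfl⟩)))

end Span

section Final

variable (R : Type*) [CommRing R]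

lemma central_single_bracket_left {z : G} (hz : z ∈ Subgroup.center G) (r : R)
    (x : MonoidAlgebra R G) :
    (MonoidAlgebra.single z r : MonoidAlgebra R G) * x -
      x * MonoidAlgebra.single z r = 0 := by
  have hsr : (MonoidAlgebra.single z r : MonoidAlgebra R G) =
      r • MonoidAlgebra.of R G z := by
    rw [MonoidAlgebra.of_apply, MonoidAlgebra.smul_single', mul_one]
  rw [hsr, smul_mul_assoc, mul_smul_comm, (of_comm_all R hz x).eq, sub_self]

lemma quad_zero (hZ : (Subgroup.center G : Set G) = {g : G | g ^ 2 = 1})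
    (hidx : (Subgroup.center G).index = 4)
    (L : MonoidAlgebra R G →ₗ[R] MonoidAlgebra R G →ₗ[R] MonoidAlgebra R G)
    (hL : ∀ x y : MonoidAlgebra R G, L x y = x * y - y * x) :
    ∀ x ∈ genSet R (G := G), ∀ y ∈ genSet R (G := G), ∀ z ∈ genSet R (G := G),
      ∀ w ∈ genSet R (G := G), L (L x y) (L z w) = 0 := by
  have inner : ∀ x ∈ genSet R (G := G), ∀ y ∈ genSet R (G := G),
      (∃ g h : G, x = sigmaEl R g ∧ y = sigmaEl R h) ∨ L x y = 0 := by
    intro x hx y hy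
    rcases hx with ⟨gx, rfl⟩ | ⟨z1, r1, hz1, rfl⟩
    · rcases hy with ⟨gy, rfl⟩ | ⟨z2, r2, hz2, rfl⟩
      · exact Or.inl ⟨gx, gy, rfl, rfl⟩
      · refine Or.inr ?_
        rw [hL, sub_eq_zero]
        have := central_single_bracket_left R hz2 r2 (sigmaEl R gx)
        rw [sub_eq_zero] at this
        exact this.symm
    · refine Or.inr ?_
      rw [hL]
      exact central_single_bracket_left R hz1 r1 y
  intro x hx y hy z hz w hw
  rcases inner x hx y hy with ⟨g, h, rfl, rfl⟩ | h0
  · rcases inner z hz w hw with ⟨k, l, rfl, rfl⟩ | h0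
    · rw [hL, hL, hL]
      exact core R hZ hidx g h k l
    · rw [h0]
      exact (L _).map_zero
  · rw [h0]
    exact LinearMap.map_zero₂ L _

end Final

end LieMetaAux

theorem lie_metabelian_of_center_eq_involutions (R G : Type*) [CommRing R] [CharZero R]
    [Group G]
    (hZ : (Subgroup.center G : Set G) = {g : G | g ^ 2 = 1})
    (hidx : (Subgroup.center G).index = 4) :
    IsLieMetabelianSet (symmetricSet R G) := by
  intro a ha b hb c hc d hd
  set L : MonoidAlgebra R G →ₗ[R] MonoidAlgebra R G →ₗ[R] MonoidAlgebra R G :=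
    LinearMap.mul R (MonoidAlgebra R G) - (LinearMap.mul R (MonoidAlgebra R G)).flip
    with hLdef
  have hL : ∀ x y : MonoidAlgebra R G, L x y = x * y - y * x := by
    intro x y
    rw [hLdef]
    simp [LinearMap.sub_apply, LinearMap.mul_apply']
  have hamem := LieMetaAux.symm_mem_span R hZ a ha
  have hbmem := LieMetaAux.symm_mem_span R hZ b hb
  have hcmem := LieMetaAux.symm_mem_span R hZ c hc
  have hdmem := LieMetaAux.symm_mem_span R hZ d hd
  set T := LieMetaAux.genSet R (G := G) with hT
  have h1 : L a b ∈ Submodule.span R (Set.image2 (fun m n => L m n) T T) := by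
    rw [← Submodule.map₂_span_span]
    exact Submodule.apply_mem_map₂ L hamem hbmem
  have h2 : L c d ∈ Submodule.span R (Set.image2 (fun m n => L m n) T T) := by
    rw [← Submodule.map₂_span_span]
    exact Submodule.apply_mem_map₂ L hcmem hdmem
  have h3 : L (L a b) (L c d) ∈ Submodule.span R
      (Set.image2 (fun m n => L m n)
        (Set.image2 (fun m n => L m n) T T) (Set.image2 (fun m n => L m n) T T)) := by
    rw [← Submodule.map₂_span_span]
    exact Submodule.apply_mem_map₂ L h1 h2
  have h4 : Set.image2 (fun m n => L m n)
      (Set.image2 (fun m n => L m n) T T) (Set.image2 (fun m n => L m n) T T) ⊆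
      ({0} : Set (MonoidAlgebra R G)) := by
    rintro e ⟨u, hu, v, hv, rfl⟩
    obtain ⟨x, hx, y, hy, rfl⟩ := hu
    obtain ⟨z, hz', w, hw, rfl⟩ := hv
    exact LieMetaAux.quad_zero R hZ hidx L hL x hx y hy z hz' w hw
  have h5 : L (L a b) (L c d) = 0 := by
    have hle := Submodule.span_mono (R := R) h4
    rw [Submodule.span_zero_singleton] at hle
    exact (Submodule.mem_bot R).mp (hle h3)
  have hfinal : (a * b - b * a) * (c * d - d * c) - (c * d - d * c) * (a * b - b * a) =
      L (L a b) (L c d) := by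
    rw [hL (L a b) (L c d), hL a b, hL c d]
  rw [hfinal, h5]
end

section
/- Let R be a commutative ring with unity and G a group. Then [RG⁺, RG⁺] ⊆ RǦ; that is, for all symmetric elements α, β ∈ RG⁺ the additive commutator [α,β] = αβ − βα lies in the R-submodule of the group ring RG generated by the set Ǧ = {g − g⁻¹ : g ∈ G}. -/
noncomputable def invMap (R G : Type*) [CommRing R] [Group G] :
    MonoidAlgebra R G → MonoidAlgebra R G :=
  MonoidAlgebra.mapDomain (fun g => g⁻¹)

lemma invMap_apply (R G : Type*) [CommRing R] [Group G] (γ : MonoidAlgebra R G) (g : G) :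
    (invMap R G γ).coeff g = γ.coeff g⁻¹ := by
  have : (invMap R G γ).coeff g = Finsupp.mapDomain (⇑(Equiv.inv G)) γ.coeff g := rfl
  rw [this, Finsupp.mapDomain_equiv_apply]
  rfl

lemma invMap_mul (R G : Type*) [CommRing R] [Group G] (x y : MonoidAlgebra R G) :
    invMap R G (x * y) = invMap R G y * invMap R G x := by
  induction x using MonoidAlgebra.induction_linear with
  | zero => simp [invMap]
  | add f g hf hg =>
      simp only [invMap] at hf hg ⊢
      rw [add_mul, MonoidAlgebra.mapDomain_add, hf, hg, MonoidAlgebra.mapDomain_add, mul_add]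
  | single a b =>
    induction y using MonoidAlgebra.induction_linear with
    | zero => simp [invMap]
    | add f g hf hg =>
        simp only [invMap] at hf hg ⊢
        rw [mul_add, MonoidAlgebra.mapDomain_add, hf, hg, MonoidAlgebra.mapDomain_add, add_mul]
    | single c d =>
      simp only [invMap, MonoidAlgebra.single_mul_single, MonoidAlgebra.mapDomain_single,
        mul_inv_rev, mul_comm]

lemma sub_invMap_mem (R G : Type*) [CommRing R] [Group G] (γ : MonoidAlgebra R G) :
    γ - invMap R G γ ∈ Submodule.span R (checkSet R G) := by
  induction γ using MonoidAlgebra.induction_linear with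
  | zero => simp [invMap]
  | add f g hf hg =>
    have := Submodule.add_mem _ hf hg
    simp only [invMap, MonoidAlgebra.mapDomain_add] at *
    convert this using 1
    abel
  | single a b =>
    have h : (MonoidAlgebra.single a b : MonoidAlgebra R G)
        - invMap R G (MonoidAlgebra.single a b)
        = b • (MonoidAlgebra.of R G a - MonoidAlgebra.of R G a⁻¹) := by
      simp only [invMap]
      rw [MonoidAlgebra.mapDomain_single]
      simp [MonoidAlgebra.of_apply, smul_sub, MonoidAlgebra.smul_single', smul_eq_mul, mul_one]
    show (MonoidAlgebra.single a b : MonoidAlgebra R G)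
        - invMap R G (MonoidAlgebra.single a b) ∈ _
    rw [h]
    exact Submodule.smul_mem _ b (Submodule.subset_span ⟨a, rfl⟩)

theorem commutator_symmetric_mem_span_check (R G : Type*) [CommRing R] [Group G]
    (α : MonoidAlgebra R G) (hα : α ∈ symmetricSet R G)
    (β : MonoidAlgebra R G) (hβ : β ∈ symmetricSet R G) :
    α * β - β * α ∈ Submodule.span R (checkSet R G) := by
  have hα' : invMap R G α = α := by ext g; rw [invMap_apply]; exact hα g
  have hβ' : invMap R G β = β := by ext g; rw [invMap_apply]; exact hβ g
  have key : β * α = invMap R G (α * β) := by rw [invMap_mul, hα', hβ']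
  rw [key]
  exact sub_invMap_mem R G (α * β)
end

section
/- Let R be a commutative ring with unity of characteristic 0 and G a group such that the set RG⁺ of symmetric elements of RG is Lie metabelian, and let A = ⟨g ∈ G : g² = 1⟩. Then every element of A can be written in the form ab with a, b ∈ G satisfying a² = b² = 1. -/
lemma aux_inv_eq_self {G : Type*} [Group G] {g : G} (hg : g ^ 2 = 1) : g⁻¹ = g := by
  rw [inv_eq_iff_mul_eq_one, ← sq, hg]

lemma aux_sq_of_inv_eq {G : Type*} [Group G] {g : G} (hg : g⁻¹ = g) : g ^ 2 = 1 := by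
  rw [sq]; nth_rewrite 1 [← hg]; exact inv_mul_cancel g

lemma aux_of_mem_symm (R G : Type*) [CommRing R] [Group G] (g : G) (hg : g ^ 2 = 1) :
    MonoidAlgebra.of R G g ∈ symmetricSet R G := by
  intro h
  have hg' : g⁻¹ = g := aux_inv_eq_self hg
  classical
  by_cases h1 : g = h
  · subst h1; rw [hg']
  · have h2 : g ≠ h⁻¹ := fun hh => h1 (by rw [← inv_inv h, ← hh, hg'])
    simp only [MonoidAlgebra.of_apply, MonoidAlgebra.single_apply, if_neg h1, if_neg h2]

lemma aux_ma_sub_apply {R G : Type*} [CommRing R] [Group G] (f g : MonoidAlgebra R G) (x : G) :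
    (f - g).coeff x = f.coeff x - g.coeff x := by
  rw [MonoidAlgebra.coeff_sub, Finsupp.sub_apply]

lemma aux_eval_zero {R G : Type*} [CommRing R] [Group G] {f : MonoidAlgebra R G}
    (h : f = 0) (x : G) : f.coeff x = 0 := by rw [h]; rfl

/-- The key consequence of Lie metabelianity of the symmetric elements: for involutions
`a, b, c` one of four group relations must hold. -/
lemma aux_key (R G : Type*) [CommRing R] [CharZero R] [Group G]
    (hmeta : IsLieMetabelianSet (symmetricSet R G))
    {a b c : G} (ha : a ^ 2 = 1) (hb : b ^ 2 = 1) (hc : c ^ 2 = 1) :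
    c*b = c*(a*(b*a)) ∨ c*b = a*(c*(a*b)) ∨ c*b = a*(b*(c*a)) ∨ c*b = b*c := by
  classical
  have haa : ∀ x : G, a*(a*x) = x := fun x => by
    rw [← mul_assoc, ← sq, ha, one_mul]
  have h := hmeta _ (aux_of_mem_symm R G c hc) _ (aux_of_mem_symm R G a ha)
    _ (aux_of_mem_symm R G a ha) _ (aux_of_mem_symm R G b hb)
  simp only [MonoidAlgebra.of_apply, mul_sub, sub_mul, MonoidAlgebra.single_mul_single,
    one_mul, mul_assoc, haa] at h
  have h2 := aux_eval_zero h (c*b)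
  simp only [aux_ma_sub_apply, MonoidAlgebra.single_apply] at h2
  by_contra hcon
  push_neg at hcon
  obtain ⟨n1, n2, n3, n4⟩ := hcon
  rw [if_neg (Ne.symm n2), if_neg (Ne.symm n1), if_neg (Ne.symm n3), if_neg (Ne.symm n4)] at h2
  split_ifs at h2 <;> norm_num at h2

/-- For involutions `a, b, c`, the product `a*(b*c)` is again a product of two involutions. -/
lemma aux_step {R G : Type*} [CommRing R] [CharZero R] [Group G]
    (hmeta : IsLieMetabelianSet (symmetricSet R G))
    {a b c : G} (ha : a ^ 2 = 1) (hb : b ^ 2 = 1) (hc : c ^ 2 = 1) :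
    ∃ p q : G, p ^ 2 = 1 ∧ q ^ 2 = 1 ∧ a*(b*c) = p*q := by
  have haa : ∀ x : G, a*(a*x) = x := fun x => by rw [← mul_assoc, ← sq, ha, one_mul]
  have hbb : ∀ x : G, b*(b*x) = x := fun x => by rw [← mul_assoc, ← sq, hb, one_mul]
  have hcc : ∀ x : G, c*(c*x) = x := fun x => by rw [← mul_assoc, ← sq, hc, one_mul]
  have ha' : a*a = 1 := by rw [← sq, ha]
  have hb' : b*b = 1 := by rw [← sq, hb]
  have hc' : c*c = 1 := by rw [← sq, hc]
  rcases aux_key R G hmeta ha hb hc with h | h | h | h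
  · -- a*b = b*a
    have hab : a*b = b*a := by
      have h1 : b = a*(b*a) := mul_left_cancel h
      calc a*b = a*(a*(b*a)) := by rw [← h1]
        _ = b*a := haa _
    refine ⟨a*b, c, ?_, hc, (mul_assoc a b c).symm⟩
    apply aux_sq_of_inv_eq
    rw [mul_inv_rev, aux_inv_eq_self ha, aux_inv_eq_self hb, ← hab]
  · -- a*c = c*a
    have hac : a*c = c*a := by
      have h1 : c = a*(c*a) := by
        apply mul_right_cancel (b := b)
        rw [h, mul_assoc, mul_assoc]
      calc a*c = a*(a*(c*a)) := by rw [← h1]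
        _ = c*a := haa _
    have hacx : ∀ x : G, a*(c*x) = c*(a*x) := fun x => by
      rw [← mul_assoc, hac, mul_assoc]
    refine ⟨a*(b*a), a*c, ?_, ?_, ?_⟩
    · apply aux_sq_of_inv_eq
      rw [mul_inv_rev, mul_inv_rev, aux_inv_eq_self ha, aux_inv_eq_self hb, mul_assoc]
    · apply aux_sq_of_inv_eq
      rw [mul_inv_rev, aux_inv_eq_self ha, aux_inv_eq_self hc, ← hac]
    · rw [mul_assoc, mul_assoc, haa]
  · -- a*(b*c) = c*(b*a), so a*(b*c) is an involution
    have habc : a*(b*c) = c*(b*a) := by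
      calc a*(b*c) = a*(b*(c*(a*a))) := by rw [ha', mul_one]
        _ = a*(b*(c*a))*a := by simp only [mul_assoc]
        _ = (c*b)*a := by rw [← h]
        _ = c*(b*a) := mul_assoc c b a
    refine ⟨a*(b*c), 1, ?_, one_pow 2, (mul_one _).symm⟩
    apply aux_sq_of_inv_eq
    rw [mul_inv_rev, mul_inv_rev, aux_inv_eq_self ha, aux_inv_eq_self hb, aux_inv_eq_self hc,
      habc, mul_assoc]
  · -- b*c = c*b
    refine ⟨a, b*c, ha, ?_, rfl⟩
    apply aux_sq_of_inv_eq
    rw [mul_inv_rev, aux_inv_eq_self hb, aux_inv_eq_self hc, h]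

theorem mem_A_eq_prod_two_involutions (R G : Type*) [CommRing R] [CharZero R] [Group G]
    (hmeta : IsLieMetabelianSet (symmetricSet R G))
    (g : G) (hg : g ∈ Subgroup.closure {g : G | g ^ 2 = 1}) :
    ∃ a b : G, a ^ 2 = 1 ∧ b ^ 2 = 1 ∧ g = a * b := by
  induction hg using Subgroup.closure_induction with
  | mem x hx => exact ⟨x, 1, hx, one_pow 2, (mul_one x).symm⟩
  | one => exact ⟨1, 1, one_pow 2, one_pow 2, (mul_one 1).symm⟩
  | mul x y hx hy ihx ihy =>
    obtain ⟨p, q, hp, hq, hxe⟩ := ihx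
    obtain ⟨r, s, hr, hs, hye⟩ := ihy
    obtain ⟨u, v, hu, hv, huv⟩ := aux_step hmeta (R := R) hq hr hs
    obtain ⟨w, z, hw, hz, hwz⟩ := aux_step hmeta (R := R) hp hu hv
    exact ⟨w, z, hw, hz, by rw [hxe, hye, mul_assoc, huv, hwz]⟩
  | inv x hx ihx =>
    obtain ⟨p, q, hp, hq, hxe⟩ := ihx
    exact ⟨q, p, hq, hp, by
      rw [hxe, mul_inv_rev, aux_inv_eq_self hp, aux_inv_eq_self hq]⟩
end

section
/- Let R be a commutative ring with unity of characteristic 0 and G a group such that the set RG⁺ of symmetric elements of RG is Lie metabelian, and let A = ⟨g ∈ G : g² = 1⟩. Then for every x ∈ G, either x commutes with every element of A, or x² ∈ A. -/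
theorem central_on_A_or_sq_mem_A (R G : Type*) [CommRing R] [CharZero R] [Group G]
    (hmeta : IsLieMetabelianSet (symmetricSet R G)) (x : G) :
    (∀ a ∈ Subgroup.closure {g : G | g ^ 2 = 1}, x * a = a * x) ∨
      x ^ 2 ∈ Subgroup.closure {g : G | g ^ 2 = 1} := by
  classical
  by_cases hcen : ∀ g ∈ {g : G | g ^ 2 = 1}, x * g = g * x
  · left
    intro a ha
    have : a ∈ Subgroup.centralizer {x} := by
      refine (Subgroup.closure_le _).2 ?_ ha
      intro g hg
      have : g ∈ Subgroup.centralizer {x} := by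
        rw [Subgroup.mem_centralizer_iff]
        intro y hy
        rcases hy with rfl
        exact hcen g hg
      exact this
    exact Subgroup.mem_centralizer_iff.1 this x rfl
  · right
    push_neg at hcen
    obtain ⟨g, hg2, hcom⟩ := hcen
    have hg : g * g = 1 := by rw [← pow_two]; exact hg2
    set A := Subgroup.closure {g : G | g ^ 2 = 1} with hA
    by_contra hx2
    -- basic group facts
    have hginv : g⁻¹ = g := by rw [inv_eq_iff_mul_eq_one, hg]
    have hgg : ∀ y : G, g * (g * y) = y := fun y => by rw [← mul_assoc, hg, one_mul]
    have memA : ∀ y : G, y * y = 1 → y ∈ A := fun y h =>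
      Subgroup.subset_closure (by simpa [pow_two] using h)
    have hgA : g ∈ A := memA g hg
    have hxx : ¬ (x * x ∈ A) := fun h => hx2 (by rwa [pow_two])
    have hxA : ¬ (x ∈ A) := fun h => hxx (A.mul_mem h h)
    -- the conjugate involutions
    have pA : x * (g * x⁻¹) ∈ A := memA _ (by
      simp only [mul_assoc, inv_mul_cancel_left, hgg, mul_inv_cancel])
    have qA : x⁻¹ * (g * x) ∈ A := memA _ (by
      simp only [mul_assoc, mul_inv_cancel_left, hgg, inv_mul_cancel])
    -- generic: x*x = (x g x⁻¹) * (g * (g x g x))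
    have hxxz : x * x = (x * (g * x⁻¹)) * (g * (g * (x * (g * x)))) := by
      simp only [mul_assoc, hgg, inv_mul_cancel_left]
    -- refutations of the nine coincidences
    have n1 : ¬ (g = x * (g * x)) := by
      intro h
      have h1 : (x * g) * (x * g) = 1 := by
        rw [mul_assoc, ← mul_assoc g x g, ← mul_assoc x, ← h, hg]
      have h2 : x ∈ A := by
        have := A.mul_mem (memA _ h1) hgA
        rwa [mul_assoc, hg, mul_one] at this
      exact hxA h2
    have hxinv : ∀ (h : x⁻¹ = x), False := by
      intro h
      have h1 : x * x⁻¹ = 1 := mul_inv_cancel x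
      rw [h] at h1
      exact hxA (memA x h1)
    have n2 : ¬ (x⁻¹ * (g * x) = x * (g * x)) := fun h =>
      hxinv (mul_right_cancel h)
    have n3 : ¬ (g * (x * x) = x * (g * x)) := by
      intro h
      have h' : (g * x) * x = (x * g) * x := by simpa [mul_assoc] using h
      exact hcom (mul_right_cancel h').symm
    have n4 : ¬ (x⁻¹ * (g * x⁻¹) = x * (g * x)) := by
      intro h
      have h1 : g = x * (x * (g * (x * x))) := by
        have := congrArg (fun y => x * y * x) h
        simpa [mul_assoc] using this
      have h2 : (g * (x * x)) * (g * (x * x)) = 1 := by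
        have e1 : (g * (x * x)) * (g * (x * x)) = g * (x * (x * (g * (x * x)))) := by
          simp [mul_assoc]
        rw [e1, ← h1, hg]
      have h3 : x * x = g * (g * (x * x)) := (hgg _).symm
      exact hxx (h3 ▸ A.mul_mem hgA (memA _ h2))
    have n5 : ¬ (x * (x * g) = x * (g * x)) := fun h =>
      hcom (mul_left_cancel h)
    have n6 : ¬ (x * (g * x⁻¹) = x * (g * x)) := fun h =>
      hxinv (mul_left_cancel (mul_left_cancel h))
    have n7 : ¬ (g * (x⁻¹ * (g * (x⁻¹ * g))) = x * (g * x)) := by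
      intro h
      have hz : (g * (x * (g * x))) * (g * (x * (g * x))) = 1 := by
        nth_rewrite 2 [← h]
        simp only [mul_assoc, hgg, mul_inv_cancel_left, inv_mul_cancel_left, hg,
          mul_inv_cancel, inv_mul_cancel, mul_one, one_mul]
      exact hxx (hxxz ▸ A.mul_mem pA (A.mul_mem hgA (memA _ hz)))
    have n8 : ¬ (g * (x * (g * (x⁻¹ * g))) = x * (g * x)) := by
      intro h
      have hz : g * (x * (g * x)) = (x * (g * x⁻¹)) * g := by
        rw [← h, hgg, mul_assoc, mul_assoc]
      exact hxx (hxxz ▸ A.mul_mem pA (A.mul_mem hgA (hz ▸ A.mul_mem pA hgA)))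
    have n9 : ¬ (g * (x⁻¹ * (g * (x * g))) = x * (g * x)) := by
      intro h
      have hz : g * (x * (g * x)) = (x⁻¹ * (g * x)) * g := by
        rw [← h, hgg, mul_assoc, mul_assoc]
      exact hxx (hxxz ▸ A.mul_mem pA (A.mul_mem hgA (hz ▸ A.mul_mem qA hgA)))
    -- the symmetric elements
    set e := MonoidAlgebra.of R G with he
    have addap : ∀ (f h : MonoidAlgebra R G) (t : G), (f + h).coeff t = f.coeff t + h.coeff t :=
      fun f h t => Finsupp.add_apply f.coeff h.coeff t
    have subap : ∀ (f h : MonoidAlgebra R G) (t : G), (f - h).coeff t = f.coeff t - h.coeff t :=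
      fun f h t => Finsupp.sub_apply f.coeff h.coeff t
    have eap : ∀ (a t : G), (e a).coeff t = if a = t then (1:R) else 0 :=
      fun a t => Finsupp.single_apply
    have zap : ∀ (t : G), (0 : MonoidAlgebra R G).coeff t = 0 := fun _ => rfl
    have ha : e g ∈ symmetricSet R G := by
      intro t
      simp only [eap]
      rw [show (g = t⁻¹) ↔ (g = t) by rw [← inv_eq_iff_eq_inv, hginv]]
    have hb : e (g*x) + e (x⁻¹*g) ∈ symmetricSet R G := by
      intro t
      simp only [addap, eap]
      rw [show (g*x = t⁻¹) ↔ (x⁻¹*g = t) by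
          rw [← inv_eq_iff_eq_inv, mul_inv_rev, hginv],
        show (x⁻¹*g = t⁻¹) ↔ (g*x = t) by
          rw [← inv_eq_iff_eq_inv, mul_inv_rev, hginv, inv_inv],
        add_comm]
    have hd : e x + e x⁻¹ ∈ symmetricSet R G := by
      intro t
      simp only [addap, eap]
      rw [show (x = t⁻¹) ↔ (x⁻¹ = t) by rw [← inv_eq_iff_eq_inv],
        show (x⁻¹ = t⁻¹) ↔ (x = t) by rw [← inv_eq_iff_eq_inv, inv_inv],
        add_comm]
    have H := hmeta (e g) ha (e (g*x) + e (x⁻¹*g)) hb (e g) ha (e x + e x⁻¹) hd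
    simp only [mul_add, add_mul, mul_sub, sub_mul, ← map_mul, mul_assoc, hgg, hg,
      inv_mul_cancel_left, mul_inv_cancel_left, mul_inv_cancel, inv_mul_cancel,
      mul_one, one_mul] at H
    have ht := congrArg (fun f : MonoidAlgebra R G => f.coeff (x * (g * x))) H
    simp only [addap, subap, eap, zap, if_pos rfl, if_neg n1, if_neg n2, if_neg n3,
      if_neg n4, if_neg n5, if_neg n6, if_neg n7, if_neg n8, if_neg n9] at ht
    split_ifs at ht <;> norm_num at ht
end
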